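/- (Netto) No continuous map f : [0,1] → ℝ² that maps [0,1] onto the unit square [0,1] × [0,1] is injective; equivalently, there is no continuous bijection from the unit interval onto the unit square. -/

import Mathlib

/-- The unit square `[0,1] × [0,1]` in the plane `ℝ²`. -/
def unitSquare : Set (ℝ × ℝ) := Set.Icc (0 : ℝ) 1 ×ˢ Set.Icc (0 : ℝ) 1

lemma convex_unitSquare : Convex ℝ unitSquare :=
  (convex_Icc (0:ℝ) 1).prod (convex_Icc (0:ℝ) 1)

lemma corners_mem : ((0:ℝ), (0:ℝ)) ∈ unitSquare ∧ ((1:ℝ), (0:ℝ)) ∈ unitSquare ∧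
    ((0:ℝ), (1:ℝ)) ∈ unitSquare := by
  refine ⟨⟨?_, ?_⟩, ⟨?_, ?_⟩, ⟨?_, ?_⟩⟩ <;> constructor <;> norm_num

lemma notCollinear_corners :
    ¬ Collinear ℝ ({((0:ℝ),(0:ℝ)), ((1:ℝ),(0:ℝ)), ((0:ℝ),(1:ℝ))} : Set (ℝ × ℝ)) := by
  intro h
  rw [collinear_iff_of_mem (by simp : ((0:ℝ),(0:ℝ)) ∈ _)] at h
  obtain ⟨v, hv⟩ := h
  obtain ⟨a, ha⟩ := hv ((1:ℝ),(0:ℝ)) (by simp)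
  obtain ⟨b, hb⟩ := hv ((0:ℝ),(1:ℝ)) (by simp)
  have ha' : ((1:ℝ),(0:ℝ)) = a • v := by rw [ha]; ext <;> simp
  have hb' : ((0:ℝ),(1:ℝ)) = b • v := by rw [hb]; ext <;> simp
  rw [Prod.ext_iff] at ha' hb'
  simp only [Prod.smul_fst, Prod.smul_snd, smul_eq_mul] at ha' hb'
  obtain ⟨ha1, ha2⟩ := ha'
  obtain ⟨hb1, hb2⟩ := hb'
  have hane : a ≠ 0 := by rintro rfl; norm_num at ha1
  have hv2 : v.2 = 0 := by
    rcases mul_eq_zero.1 ha2.symm with h | h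
    · exact absurd h hane
    · exact h
  rw [hv2, mul_zero] at hb2
  norm_num at hb2

/-- collinearity from segment membership -/
lemma collinear_of_mem_segment {p q r : ℝ × ℝ} (h : p ∈ segment ℝ q r) :
    Collinear ℝ ({p, q, r} : Set (ℝ × ℝ)) :=
  collinear_insert_of_mem_affineSpan_pair ((mem_segment_iff_wbtw.1 h).mem_affineSpan)

lemma avoid_segments {p q r s : ℝ × ℝ} (hqr : p ∈ segment ℝ q r)
    (hpq : p ≠ q) (hpr : p ≠ r) (hncol : ¬ Collinear ℝ ({q, r, s} : Set (ℝ × ℝ))) :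
    p ∉ segment ℝ q s ∧ p ∉ segment ℝ s r := by
  have c1 : Collinear ℝ ({p, q, r} : Set (ℝ × ℝ)) := collinear_of_mem_segment hqr
  constructor
  · intro hmem
    have c2 : Collinear ℝ ({p, q, s} : Set (ℝ × ℝ)) := collinear_of_mem_segment hmem
    have h4 : Collinear ℝ (insert s ({p, q, r} : Set (ℝ × ℝ))) := by
      rw [c1.collinear_insert_iff_of_ne (by simp : p ∈ _) (by simp : q ∈ _) hpq]
      exact c2.subset (by intro x hx; simp at hx ⊢; tauto)
    exact hncol (h4.subset (by intro x hx; simp at hx ⊢; tauto))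
  · intro hmem
    have c2 : Collinear ℝ ({p, s, r} : Set (ℝ × ℝ)) := collinear_of_mem_segment hmem
    have h4 : Collinear ℝ (insert s ({p, q, r} : Set (ℝ × ℝ))) := by
      rw [c1.collinear_insert_iff_of_ne (by simp : p ∈ _) (by simp : r ∈ _) hpr]
      exact c2.subset (by intro x hx; simp at hx ⊢; tauto)
    exact hncol (h4.subset (by intro x hx; simp at hx ⊢; tauto))

/-- the unit square minus any point is path connected -/
lemma square_diff_pathConnected (p : ℝ × ℝ) : IsPathConnected (unitSquare \ {p}) := by
  obtain ⟨hc0, hc1, hc2⟩ := corners_mem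
  rw [isPathConnected_iff]
  constructor
  · by_cases h : p = ((0:ℝ),(0:ℝ))
    · refine ⟨((1:ℝ),(0:ℝ)), hc1, ?_⟩
      simp only [Set.mem_singleton_iff, h]
      intro he
      exact one_ne_zero (congrArg Prod.fst he)
    · exact ⟨((0:ℝ),(0:ℝ)), hc0, fun he => h (Set.mem_singleton_iff.1 he).symm⟩
  · intro q hq r hr
    obtain ⟨hqS, hqp⟩ := hq
    obtain ⟨hrS, hrp⟩ := hr
    by_cases hseg : p ∈ segment ℝ q r
    · -- p is on the segment; detour via a corner not collinear with q, r
      have hpq : p ≠ q := fun h => hqp (by simp [h.symm]) |>.elim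
      have hpq' : p ≠ q := hpq
      have hpr : p ≠ r := fun h => hrp (by simp [h.symm]) |>.elim
      have hqr : q ≠ r := by
        rintro rfl
        rw [segment_same] at hseg
        exact hpq (by simpa using hseg)
      -- find a corner not collinear with q, r
      have hex : ∃ s, s ∈ unitSquare ∧ ¬ Collinear ℝ ({q, r, s} : Set (ℝ × ℝ)) := by
        by_contra hcon
        push_neg at hcon
        have k0 := hcon _ hc0
        have k1 := hcon _ hc1
        have k2 := hcon _ hc2
        have m0 : ((0:ℝ),(0:ℝ)) ∈ line[ℝ, q, r] :=
          k0.mem_affineSpan_of_mem_of_ne (by simp) (by simp) (by simp) hqr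
        have m1 : ((1:ℝ),(0:ℝ)) ∈ line[ℝ, q, r] :=
          k1.mem_affineSpan_of_mem_of_ne (by simp) (by simp) (by simp) hqr
        have m2 : ((0:ℝ),(1:ℝ)) ∈ line[ℝ, q, r] :=
          k2.mem_affineSpan_of_mem_of_ne (by simp) (by simp) (by simp) hqr
        exact notCollinear_corners (collinear_triple_of_mem_affineSpan_pair m0 m1 m2)
      obtain ⟨s, hsS, hsncol⟩ := hex
      obtain ⟨h1, h2⟩ := avoid_segments hseg hpq hpr hsncol
      have hsp : s ≠ p := by
        rintro rfl
        exact hsncol ((collinear_of_mem_segment hseg).subset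
          (by intro x hx; simp at hx ⊢; tauto))
      have j1 : JoinedIn (unitSquare \ {p}) q s := by
        apply JoinedIn.of_segment_subset
        intro x hx
        exact ⟨convex_unitSquare.segment_subset hqS hsS hx,
          fun hxp => h1 (by rwa [Set.mem_singleton_iff.1 hxp] at hx)⟩
      have j2 : JoinedIn (unitSquare \ {p}) s r := by
        apply JoinedIn.of_segment_subset
        intro x hx
        exact ⟨convex_unitSquare.segment_subset hsS hrS hx,
          fun hxp => h2 (by rwa [Set.mem_singleton_iff.1 hxp] at hx)⟩
      exact j1.trans j2
    · apply JoinedIn.of_segment_subset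
      intro x hx
      exact ⟨convex_unitSquare.segment_subset hqS hrS hx,
        fun hxp => hseg (by rwa [Set.mem_singleton_iff.1 hxp] at hx)⟩

lemma icc_diff_half_not_preconnected :
    ¬ IsPreconnected (Set.Icc (0:ℝ) 1 \ {(1:ℝ)/2}) := by
  intro h
  have h0 : (0:ℝ) ∈ Set.Icc (0:ℝ) 1 \ {(1:ℝ)/2} := by norm_num
  have h1 : (1:ℝ) ∈ Set.Icc (0:ℝ) 1 \ {(1:ℝ)/2} := by norm_num
  have := h.ordConnected.out h0 h1 (by norm_num : (1:ℝ)/2 ∈ Set.Icc (0:ℝ) 1)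
  simp at this

/-- (Netto) No continuous map from `[0,1]` onto the unit square is injective:
there is no continuous bijection from the unit interval onto the unit square. -/
theorem netto_no_injective_space_filling_curve :
    ∀ f : ℝ → ℝ × ℝ, ContinuousOn f (Set.Icc 0 1) →
      f '' Set.Icc 0 1 = unitSquare → ¬ Set.InjOn f (Set.Icc 0 1) := by
  intro f hcont himg hinj
  have hbij : Set.BijOn f (Set.Icc (0:ℝ) 1) unitSquare :=
    ⟨fun x hx => himg ▸ Set.mem_image_of_mem f hx, hinj, himg.symm.subset⟩
  classical
  haveI : CompactSpace (Set.Icc (0:ℝ) 1) := isCompact_iff_compactSpace.1 isCompact_Icc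
  let e : Set.Icc (0:ℝ) 1 ≃ unitSquare := hbij.equiv f
  have hecont : Continuous (e : Set.Icc (0:ℝ) 1 → unitSquare) := by
    apply Continuous.subtype_mk
    exact hcont.restrict
  let h : Set.Icc (0:ℝ) 1 ≃ₜ unitSquare := hecont.homeoOfEquivCompactToT2
  let F : ℝ × ℝ → ℝ := fun x => if hx : x ∈ unitSquare then (h.symm ⟨x, hx⟩ : ℝ) else 0
  have hFcont : ContinuousOn F unitSquare := by
    rw [continuousOn_iff_continuous_restrict]
    have hre : unitSquare.domRestrict F = fun x => ((h.symm x : Set.Icc (0:ℝ) 1) : ℝ) := by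
      funext x
      simp only [Set.domRestrict_apply, F, dif_pos x.2]
    rw [hre]
    exact continuous_subtype_val.comp h.symm.continuous
  have hF : ∀ t ∈ Set.Icc (0:ℝ) 1, F (f t) = t := by
    intro t ht
    have hft : f t ∈ unitSquare := hbij.1 ht
    have h1 : h ⟨t, ht⟩ = ⟨f t, hft⟩ := rfl
    have h2 : h.symm ⟨f t, hft⟩ = ⟨t, ht⟩ := by rw [← h1]; exact h.symm_apply_apply _
    simp only [F, dif_pos hft, h2]
  -- the image of the punctured interval is the punctured square
  have key : F '' (unitSquare \ {f ((1:ℝ)/2)}) = Set.Icc (0:ℝ) 1 \ {(1:ℝ)/2} := by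
    ext t
    constructor
    · rintro ⟨x, ⟨hxS, hxne⟩, rfl⟩
      obtain ⟨u, hu, rfl⟩ : ∃ u ∈ Set.Icc (0:ℝ) 1, f u = x := by
        have := himg.symm.subset hxS
        obtain ⟨u, hu, hux⟩ := this
        exact ⟨u, hu, hux⟩
      rw [hF u hu]
      refine ⟨hu, ?_⟩
      intro hmem
      apply hxne
      rw [Set.mem_singleton_iff.1 hmem]
      exact Set.mem_singleton _
    · rintro ⟨ht, htne⟩
      refine ⟨f t, ⟨hbij.1 ht, ?_⟩, hF t ht⟩
      intro hmem
      exact htne (Set.mem_singleton_iff.2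
        (hinj ht (by norm_num) (Set.mem_singleton_iff.1 hmem)))
  -- contradiction: punctured square is connected, punctured interval is not
  have hconn : IsPreconnected (unitSquare \ {f ((1:ℝ)/2)}) :=
    (square_diff_pathConnected (f ((1:ℝ)/2))).isConnected.isPreconnected
  have himage : IsPreconnected (F '' (unitSquare \ {f ((1:ℝ)/2)})) :=
    hconn.image F (hFcont.mono Set.diff_subset)
  rw [key] at himage
  exact icc_diff_half_not_preconnected himage
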